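/- A linear functional Z on RΛ lies in the Tits cone W·C̄_R if and only if Z(α) < 0 for only finitely many positive real roots α ∈ Φ⁺. -/

import Mathlib

noncomputable def coxEntry {B : Type*} (M : CoxeterMatrix B) (s t : B) : ℝ :=
  if M s t = 0 then -2 else -2 * Real.cos (Real.pi / (M s t))

noncomputable def coxForm {B : Type*} [Fintype B] (M : CoxeterMatrix B) (v w : B → ℝ) : ℝ :=
  ∑ s, ∑ t, v s * w t * coxEntry M s t

/-- The simple root `α_s` in `RΛ ≅ (B → ℝ)`. -/
noncomputable def simpleRoot {B : Type*} [DecidableEq B] (s : B) : B → ℝ := Pi.single s 1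

/-- The set of real roots: the `W`-orbit of the simple roots under the Tits representation. -/
def rootSet {B : Type*} [DecidableEq B] {W : Type*} [Group W]
    (ρ : W →* ((B → ℝ) ≃ₗ[ℝ] (B → ℝ))) : Set (B → ℝ) :=
  {v | ∃ (w : W) (s : B), v = ρ w (simpleRoot s)}

/-- The set of positive real roots. -/
def posRootSet {B : Type*} [DecidableEq B] {W : Type*} [Group W]
    (ρ : W →* ((B → ℝ) ≃ₗ[ℝ] (B → ℝ))) : Set (B → ℝ) :=
  {v ∈ rootSet ρ | ∀ i, 0 ≤ v i}

/-- The set `K = {v ∈ ℝ_{≥0}Λ : B(v, α_s) ≤ 0 for all s}`. -/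
noncomputable def coneK {B : Type*} [Fintype B] [DecidableEq B] (M : CoxeterMatrix B) :
    Set (B → ℝ) :=
  {v | (∀ i, 0 ≤ v i) ∧ ∀ s, coxForm M v (simpleRoot s) ≤ 0}

/-- The closed imaginary cone `I = closure (W · K)`. -/
noncomputable def imagCone {B : Type*} [Fintype B] [DecidableEq B] (M : CoxeterMatrix B)
    {W : Type*} [Group W] (ρ : W →* ((B → ℝ) ≃ₗ[ℝ] (B → ℝ))) : Set (B → ℝ) :=
  closure {v | ∃ (w : W), ∃ k ∈ coneK M, v = ρ w k}


/-- The Tits cone `T = W · C̄` in the dual space: `Z ∈ T` iff for some `w ∈ W` the functional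
`w⁻¹ · Z` is nonnegative on all simple roots, i.e. `Z` is nonnegative on `ρ w (α_s)` for all
`s`. -/
def titsCone {B : Type*} [DecidableEq B] {W : Type*} [Group W]
    (ρ : W →* ((B → ℝ) ≃ₗ[ℝ] (B → ℝ))) : Set (Module.Dual ℝ (B → ℝ)) :=
  {Z | ∃ w : W, ∀ s : B, 0 ≤ Z (ρ w (simpleRoot s))}


open CoxeterSystem List
open scoped Classical

namespace CoxProof

variable {B : Type*} {W : Type*} [Group W] {M : CoxeterMatrix B} (cs : CoxeterSystem M W)

local prefix:100 "s" => cs.simple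
local prefix:100 "π" => cs.wordProd
local prefix:100 "ℓ" => cs.length
local prefix:100 "ris" => cs.rightInvSeq

lemma shuttle (x y : W) (k : ℕ) : y * (x * y) ^ k = (y * x) ^ k * y := by
  induction k with
  | zero => simp
  | succ k ih =>
    rw [pow_succ, ← mul_assoc, ih, pow_succ]
    group

lemma conj_alt (i j : B) (n : ℕ) :
    (π (alternatingWord i j n))⁻¹ * (if Even n then s j else s i) * π (alternatingWord i j n)
      = (s j * s i) ^ n * s j := by
  have hq : (s i * s j)⁻¹ = s j * s i := by
    rw [mul_inv_rev, cs.inv_simple, cs.inv_simple]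
  rw [cs.prod_alternatingWord_eq_mul_pow]
  rcases Nat.even_or_odd n with he | ho
  · obtain ⟨k, rfl⟩ := he
    have h2 : (k + k) / 2 = k := by omega
    rw [h2, if_pos (Even.add_self k), if_pos (Even.add_self k), one_mul]
    calc ((s i * s j) ^ k)⁻¹ * s j * (s i * s j) ^ k
        = (s j * s i) ^ k * (s j * (s i * s j) ^ k) := by
          rw [← inv_pow, hq]; simp only [mul_assoc]
      _ = (s j * s i) ^ k * ((s j * s i) ^ k * s j) := by rw [shuttle]
      _ = (s j * s i) ^ (k + k) * s j := by
          rw [pow_add]; simp only [mul_assoc]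
  · obtain ⟨k, rfl⟩ := ho
    have hne : ¬ Even (2 * k + 1) := by simp [parity_simps]
    have h2 : (2 * k + 1) / 2 = k := by omega
    rw [h2, if_neg hne, if_neg hne]
    calc (s j * (s i * s j) ^ k)⁻¹ * s i * (s j * (s i * s j) ^ k)
        = (s j * s i) ^ k * (s j * (s i * (s j * (s i * s j) ^ k))) := by
          rw [mul_inv_rev, ← inv_pow, hq, cs.inv_simple]; simp only [mul_assoc]
      _ = (s j * s i) ^ k * (s j * (s i * ((s j * s i) ^ k * s j))) := by rw [shuttle]
      _ = (s j * s i) ^ k * (s j * ((s i * (s j * s i) ^ k) * s j)) := by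
          simp only [mul_assoc]
      _ = (s j * s i) ^ k * (s j * (((s i * s j) ^ k * s i) * s j)) := by rw [shuttle]
      _ = (s j * s i) ^ k * (((s j * s i) ^ k * s j) * (s i * s j)) := by
            rw [mul_assoc ((s i * s j) ^ k), ← pow_succ, shuttle, pow_succ]
            simp only [mul_assoc]
      _ = ((s j * s i) ^ k * (s j * s i) ^ k) * ((s j * s i) * s j) := by
          simp only [mul_assoc]
      _ = (s j * s i) ^ (2 * k + 1) * s j := by
            rw [← pow_add, ← mul_assoc, ← pow_succ]
            congr 2
            omega

lemma ris_alt (i j : B) (n : ℕ) :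
    ris (alternatingWord i j n)
      = (List.range n).map (fun k => (s j * s i) ^ (n - 1 - k) * s j) := by
  induction n with
  | zero => simp [alternatingWord]
  | succ n ih =>
    rw [CoxeterSystem.alternatingWord_succ' i j n, List.range_succ_eq_map]
    show ((π (alternatingWord i j n))⁻¹ * s (if Even n then j else i) * π (alternatingWord i j n))
        :: ris (alternatingWord i j n) = _
    rw [List.map_cons, ih, List.map_map]
    congr 1
    · rw [apply_ite cs.simple]
      simpa using conj_alt cs i j n
    · apply List.map_congr_left
      intro k _
      simp only [Function.comp_apply]
      congr 2
      omega

lemma count_ris_alt_even (i j : B) (x : W) :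
    Even (List.count x (ris (alternatingWord i j (2 * M i j)))) := by
  rw [ris_alt, two_mul, List.range_add, List.map_append, List.map_map, List.count_append]
  set m := M i j with hm
  have hper : ((fun k => (s j * s i) ^ (m + m - 1 - k) * s j) ∘ fun x => m + x)
      = fun k => (s j * s i) ^ (m - 1 - k) * s j := by
    funext k
    simp only [Function.comp_apply]
    rcases Nat.lt_or_ge k m with hk | hk
    · have h1 : m + m - 1 - (m + k) = m - 1 - k := by omega
      rw [h1]
    · have h1 : m + m - 1 - (m + k) = 0 := by omega
      have h2 : m - 1 - k = 0 := by omega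
      rw [h1, h2]
  rw [hper]
  have heq : List.map (fun k => (s j * s i) ^ (m + m - 1 - k) * s j) (List.range m)
      = List.map (fun k => (s j * s i) ^ (m - 1 - k) * s j) (List.range m) := by
    apply List.map_congr_left
    intro k hk
    rw [List.mem_range] at hk
    have h1 : m + m - 1 - k = m + (m - 1 - k) := by omega
    have hq1 : (s j * s i) ^ m = 1 := cs.simple_mul_simple_pow' i j
    rw [h1, pow_add, hq1, one_mul]
  rw [heq]
  exact ⟨_, rfl⟩

/-- The underlying function of the permutation of `W × ZMod 2` attached to a generator. -/
noncomputable def myFfun (i : B) : W × ZMod 2 → W × ZMod 2 :=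
  fun p => (s i * p.1 * s i, p.2 + if p.1 = s i then 1 else 0)

lemma myFfun_invol (i : B) : Function.Involutive (myFfun cs i) := by
  rintro ⟨w, ε⟩
  unfold myFfun
  have hss := cs.simple_mul_simple_self i
  have h1 : s i * (s i * w * s i) * s i = w := by
    calc s i * (s i * w * s i) * s i = (s i * s i) * w * (s i * s i) := by
          simp only [mul_assoc]
      _ = w := by rw [hss]; simp
  have h2 : (s i * w * s i = s i) ↔ w = s i := by
    constructor
    · intro hh
      have h3 : w = (s i)⁻¹ * (s i * w * s i) * (s i)⁻¹ := by group
      rw [hh, cs.inv_simple] at h3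
      rwa [hss, one_mul] at h3
    · rintro rfl
      rw [hss, one_mul]
  simp only [h1, h2, Prod.mk.injEq]
  refine ⟨trivial, ?_⟩
  by_cases hw : w = s i
  · have : (1 + 1 : ZMod 2) = 0 := rfl
    simp [hw, add_assoc, this]
  · simp [hw]

/-- The permutation of `W × ZMod 2` attached to a simple generator. -/
noncomputable def myF (i : B) : Equiv.Perm (W × ZMod 2) := (myFfun_invol cs i).toPerm _

lemma myF_apply (i : B) (w : W) (ε : ZMod 2) :
    myF cs i (w, ε) = (s i * w * s i, ε + if w = s i then 1 else 0) := rfl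

lemma prod_myF_apply (ω : List B) (w : W) (ε : ZMod 2) :
    (List.map (myF cs) ω).prod (w, ε)
      = (π ω * w * (π ω)⁻¹, ε + (List.count w (ris ω) : ZMod 2)) := by
  induction ω generalizing w ε with
  | nil => simp
  | cons i ω ih =>
    rw [List.map_cons, List.prod_cons, Equiv.Perm.mul_apply, ih, myF_apply]
    have hris : ris (i :: ω) = ((π ω)⁻¹ * s i * π ω) :: ris ω := rfl
    rw [cs.wordProd_cons, hris]
    simp only [Prod.mk.injEq]
    constructor
    · rw [mul_inv_rev, cs.inv_simple]
      simp only [mul_assoc]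
    · by_cases hc : (π ω)⁻¹ * s i * π ω = w
      · have hc2 : π ω * w * (π ω)⁻¹ = s i := by rw [← hc]; group
        have hcast : ((List.count w (ris ω) + 1 : ℕ) : ZMod 2)
            = (List.count w (ris ω) : ZMod 2) + 1 := by push_cast; ring
        simp [List.count_cons, hc, hc2, hcast, add_assoc]
      · have hc2 : ¬ (π ω * w * (π ω)⁻¹ = s i) := fun h => hc (by rw [← h]; group)
        simp [List.count_cons, hc, hc2]

lemma pow_myF_eq_prod (i j : B) (n : ℕ) :
    (myF cs i * myF cs j) ^ n = (List.map (myF cs) (alternatingWord i j (2 * n))).prod := by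
  induction n with
  | zero => simp [alternatingWord]
  | succ n ih =>
    have h1 : 2 * (n + 1) = (2 * n + 1) + 1 := by omega
    rw [h1, CoxeterSystem.alternatingWord_succ', CoxeterSystem.alternatingWord_succ']
    have he : ¬ Even (2 * n + 1) := by simp [parity_simps]
    have he2 : Even (2 * n) := even_two_mul n
    rw [if_neg he, if_pos he2]
    rw [List.map_cons, List.map_cons, List.prod_cons, List.prod_cons, ← ih]
    rw [pow_succ']
    simp only [mul_assoc]

lemma myF_liftable : M.IsLiftable (myF cs) := by
  intro i j
  rw [pow_myF_eq_prod]
  apply Equiv.ext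
  rintro ⟨w, ε⟩
  rw [Equiv.Perm.one_apply, prod_myF_apply]
  have hπ : π (alternatingWord i j (2 * M i j)) = 1 := by
    rw [cs.prod_alternatingWord_eq_mul_pow, if_pos (even_two_mul _)]
    have h2 : 2 * M i j / 2 = M i j := by omega
    rw [h2, one_mul, cs.simple_mul_simple_pow]
  obtain ⟨d, hd⟩ := count_ris_alt_even cs i j w
  have hcast : ((List.count w (ris (alternatingWord i j (2 * M i j))) : ℕ) : ZMod 2) = 0 := by
    rw [hd]
    push_cast
    rw [← two_mul, show (2 : ZMod 2) = 0 from rfl, zero_mul]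
  rw [hπ, hcast]
  simp

/-- The sign homomorphism into permutations of `W × ZMod 2`. -/
noncomputable def myPhi : W →* Equiv.Perm (W × ZMod 2) :=
  cs.lift ⟨myF cs, myF_liftable cs⟩

lemma myPhi_wordProd (ω : List B) : myPhi cs (π ω) = (List.map (myF cs) ω).prod := by
  induction ω with
  | nil => simp [myPhi]
  | cons i ω ih =>
    rw [cs.wordProd_cons, map_mul, ih, List.map_cons, List.prod_cons]
    congr 1
    exact cs.lift_apply_simple (myF_liftable cs) i

lemma count_parity_eq {ω ω' : List B} (h : π ω = π ω') (w : W) :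
    (List.count w (ris ω) : ZMod 2) = (List.count w (ris ω') : ZMod 2) := by
  have h2 : (List.map (myF cs) ω).prod = (List.map (myF cs) ω').prod := by
    rw [← myPhi_wordProd, ← myPhi_wordProd, h]
  have h3 := congrArg (fun (σ : Equiv.Perm (W × ZMod 2)) => (σ (w, 0)).2) h2
  simp only [prod_myF_apply, zero_add] at h3
  exact h3

/-- The (right) exchange property. -/
theorem exchange {ω : List B} (hred : cs.IsReduced ω) {i : B}
    (hdrop : ℓ (π ω * s i) < ℓ (π ω)) :
    ∃ j < ω.length, π ω * s i = π (ω.eraseIdx j) := by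
  obtain ⟨χ, hχlen, hχ⟩ := cs.exists_reduced_word (π ω * s i)
  have hχred : cs.IsReduced χ := by
    exact hχlen
  have hconc : π (χ.concat i) = π ω := by
    rw [cs.wordProd_concat, ← hχ, mul_assoc, cs.simple_mul_simple_self, mul_one]
  have hnotmem : s i ∉ ris χ := by
    intro hmem
    have h4 := cs.isRightInversion_of_mem_rightInvSeq hχred hmem
    rw [← hχ] at h4
    have h5 : π ω * s i * s i = π ω := cs.simple_mul_simple_cancel_right i
    have h6 := h4.2
    rw [h5] at h6
    omega
  have hcnt' : List.count (s i) (ris (χ.concat i)) = 1 := by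
    rw [cs.rightInvSeq_concat, List.concat_eq_append, List.count_append]
    have hz : List.count (s i) (List.map (MulAut.conj (s i)) (ris χ)) = 0 := by
      rw [List.count_eq_zero]
      intro hmem
      obtain ⟨t, ht, htt⟩ := List.mem_map.mp hmem
      have ht2 : t = s i := by
        have h6 : s i * t * (s i)⁻¹ = s i := htt
        have h7 : t = (s i)⁻¹ * (s i * t * (s i)⁻¹) * s i := by group
        rw [h6, cs.inv_simple, cs.simple_mul_simple_self, one_mul] at h7
        exact h7
      exact hnotmem (ht2 ▸ ht)
    rw [hz, List.count_singleton]
    simp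
  have hpar := count_parity_eq cs hconc.symm (s i)
  rw [hcnt'] at hpar
  have hmem : s i ∈ ris ω := by
    by_contra hn
    rw [List.count_eq_zero.mpr hn] at hpar
    norm_num at hpar
  obtain ⟨j, hj, hje⟩ := List.mem_iff_getElem.mp hmem
  rw [cs.length_rightInvSeq] at hj
  refine ⟨j, hj, ?_⟩
  rw [← cs.wordProd_mul_getD_rightInvSeq ω j]
  congr 1
  rw [List.getD_eq_getElem _ 1 (by rwa [cs.length_rightInvSeq])]
  exact hje.symm

/-- Words in the letters `i`, `j`. -/
def IsST (i j : B) (χ : List B) : Prop := ∀ c ∈ χ, c = i ∨ c = j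

lemma reduced_append_of_minimal (i j : B) (u : W)
    (hu : ∀ χ : List B, IsST i j χ → ℓ u ≤ ℓ (u * π χ))
    (ωu : List B) (hωu : cs.IsReduced ωu) (hπu : π ωu = u) :
    ∀ χ : List B, IsST i j χ →
      (∀ ψ : List B, IsST i j ψ → π ψ = π χ → χ.length ≤ ψ.length) →
      cs.IsReduced (ωu ++ χ) := by
  intro χ
  induction χ using List.reverseRecOn with
  | nil => intro _ _; simpa using hωu
  | append_singleton χ₀ σ ih =>
    intro hχ hmin
    have hσ : σ = i ∨ σ = j := hχ σ (by simp)
    have hχ₀ : IsST i j χ₀ := fun d hd => hχ d (by simp [hd])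
    have hmin₀ : ∀ ψ, IsST i j ψ → π ψ = π χ₀ → χ₀.length ≤ ψ.length := by
      intro ψ hψ hπψ
      have h1 := hmin (ψ ++ [σ]) (fun d hd => by
          rcases List.mem_append.mp hd with h | h
          · exact hψ d h
          · simp at h; subst h; exact hσ)
        (by rw [cs.wordProd_append, hπψ, ← cs.wordProd_append])
      simp at h1
      omega
    have ihred := ih hχ₀ hmin₀
    have hlen0 : ℓ (π (ωu ++ χ₀)) = (ωu ++ χ₀).length := ihred
    rw [List.length_append] at hlen0
    have hπappend : π (ωu ++ (χ₀ ++ [σ])) = π (ωu ++ χ₀) * s σ := by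
      rw [← List.append_assoc, ← List.concat_eq_append, cs.wordProd_concat]
    rcases cs.length_mul_simple (π (ωu ++ χ₀)) σ with hinc | hdec
    · show ℓ (π (ωu ++ (χ₀ ++ [σ]))) = (ωu ++ (χ₀ ++ [σ])).length
      rw [hπappend, hinc, hlen0]
      simp
      omega
    · exfalso
      have hne := cs.length_mul_simple_ne (π (ωu ++ χ₀)) σ
      obtain ⟨jj, hjj, hje⟩ := exchange cs (i := σ) ihred (by omega)
      simp only [List.length_append] at hjj
      rcases Nat.lt_or_ge jj ωu.length with hcase | hcase
      · rw [List.eraseIdx_append_of_lt_length hcase] at hje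
        have hje' : u * π χ₀ * s σ = π (ωu.eraseIdx jj) * π χ₀ := by
          rw [← hπu, ← cs.wordProd_append, ← cs.wordProd_append]
          exact hje
        have h3 : π (χ₀ ++ ([σ] ++ χ₀.reverse)) = π χ₀ * s σ * (π χ₀)⁻¹ := by
          rw [cs.wordProd_append, cs.wordProd_append, cs.wordProd_reverse,
            cs.wordProd_singleton, ← mul_assoc]
        have h2 : u * π (χ₀ ++ ([σ] ++ χ₀.reverse)) = π (ωu.eraseIdx jj) := by
          rw [h3]
          calc u * (π χ₀ * s σ * (π χ₀)⁻¹)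
              = (u * π χ₀ * s σ) * (π χ₀)⁻¹ := by simp only [mul_assoc]
            _ = (π (ωu.eraseIdx jj) * π χ₀) * (π χ₀)⁻¹ := by rw [hje']
            _ = π (ωu.eraseIdx jj) := by simp [mul_assoc]
        have h4 : ℓ u ≤ ℓ (u * π (χ₀ ++ ([σ] ++ χ₀.reverse))) := by
          apply hu
          intro d hd
          rcases List.mem_append.mp hd with h | h
          · exact hχ₀ d h
          · rcases List.mem_append.mp h with h' | h'
            · simp at h'; subst h'; exact hσ
            · exact hχ₀ d (List.mem_reverse.mp h')
        rw [h2] at h4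
        have h5 : ℓ (π (ωu.eraseIdx jj)) ≤ (ωu.eraseIdx jj).length :=
          cs.length_wordProd_le _
        have h6 : (ωu.eraseIdx jj).length = ωu.length - 1 := by
          rw [List.length_eraseIdx, if_pos hcase]
        have h7 : ℓ u = ωu.length := by rw [← hπu]; exact hωu
        omega
      · rw [List.eraseIdx_append_of_length_le hcase] at hje
        have hje' : π χ₀ * s σ = π (χ₀.eraseIdx (jj - ωu.length)) := by
          apply mul_left_cancel (a := π ωu)
          rw [← mul_assoc, ← cs.wordProd_append, ← cs.wordProd_append]
          exact hje
        have h3 := hmin (χ₀.eraseIdx (jj - ωu.length))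
          (fun d hd => hχ₀ d (List.mem_of_mem_eraseIdx hd))
          (by rw [← hje', ← cs.wordProd_singleton, ← cs.wordProd_append])
        have h4 : (χ₀.eraseIdx (jj - ωu.length)).length = χ₀.length - 1 := by
          rw [List.length_eraseIdx, if_pos (by omega)]
        simp at h3
        omega

lemma exists_alternating (i j : B) :
    ∀ χ : List B, IsST i j χ → ∃ ψ : List B, IsST i j ψ ∧ ψ.Chain' (· ≠ ·) ∧
      π ψ = π χ ∧ ψ.length ≤ χ.length := by
  intro χ
  induction χ with
  | nil => exact fun _ => ⟨[], by simp [IsST], List.isChain_nil, rfl, le_refl _⟩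
  | cons c rest ih =>
    intro hχ
    obtain ⟨ψ, hψst, hψch, hψπ, hψlen⟩ := ih (fun d hd => hχ d (by simp [hd]))
    rcases ψ with _ | ⟨h, tail⟩
    · refine ⟨[c], fun d hd => by simp at hd; rw [hd]; exact hχ c (by simp), List.isChain_singleton c, ?_, by simp⟩
      rw [cs.wordProd_singleton, cs.wordProd_cons, ← hψπ, cs.wordProd_nil, mul_one]
    · by_cases hch : c = h
      · refine ⟨tail, fun d hd => hψst d (by simp [hd]), hψch.tail, ?_, ?_⟩
        · rw [cs.wordProd_cons, ← hψπ, cs.wordProd_cons, hch,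
            cs.simple_mul_simple_cancel_left]
        · simp at hψlen ⊢
          omega
      · refine ⟨c :: (h :: tail), fun d hd => by
          rcases List.mem_cons.mp hd with h' | h'
          · rw [h']; exact hχ c (by simp)
          · exact hψst d h', List.isChain_cons_cons.mpr ⟨hch, hψch⟩, ?_, by simpa using hψlen⟩
        calc π (c :: (h :: tail)) = s c * π (h :: tail) := cs.wordProd_cons _ _
          _ = s c * π rest := by rw [hψπ]
          _ = π (c :: rest) := (cs.wordProd_cons _ _).symm

lemma mem_alternatingWord (x y : B) (L : ℕ) :
    ∀ c ∈ alternatingWord x y L, c = x ∨ c = y := by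
  induction L with
  | zero => simp [alternatingWord]
  | succ L ih =>
    intro c hc
    rw [CoxeterSystem.alternatingWord_succ'] at hc
    rcases List.mem_cons.mp hc with h | h
    · subst h
      by_cases hL : Even L <;> simp [hL]
    · exact ih c h

lemma eq_alternatingWord_of_chain (i j : B) :
    ∀ χ : List B, IsST i j χ → χ.Chain' (· ≠ ·) →
      (χ = [] ∨ χ.getLast? = some j) → χ = alternatingWord i j χ.length := by
  intro χ
  induction χ with
  | nil => intro _ _ _; simp [alternatingWord]
  | cons c rest ih =>
    intro hst hch hlast
    replace hlast : (c :: rest).getLast? = some j := by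
      rcases hlast with h | h
      · simp at h
      · exact h
    rcases rest with _ | ⟨r, rest'⟩
    · have hcj : c = j := by simpa using hlast
      rw [hcj]
      rw [show ([j] : List B).length = 0 + 1 from rfl, CoxeterSystem.alternatingWord_succ']
      simp [alternatingWord]
    · have hlast' : (r :: rest').getLast? = some j := by
        rwa [List.getLast?_cons_cons] at hlast
      have hih := ih (fun d hd => hst d (by simp [hd])) (List.isChain_cons_cons.mp hch).2
        (Or.inr hlast')
      simp only [List.length_cons] at hih
      have hcr : c ≠ r := (List.isChain_cons_cons.mp hch).1
      have hr : r = (if Even rest'.length then j else i) := by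
        rw [CoxeterSystem.alternatingWord_succ'] at hih
        exact (List.cons_eq_cons.mp hih).1
      have hc2 : c = (if Even (rest'.length + 1) then j else i) := by
        have hci : c = i ∨ c = j := hst c (by simp)
        by_cases he : Even rest'.length
        · rw [if_pos he] at hr
          rw [if_neg (by simp [Nat.even_add_one, he])]
          rcases hci with h1 | h1
          · exact h1
          · exact absurd (h1.trans hr.symm) hcr
        · rw [if_neg he] at hr
          rw [if_pos (by simp [Nat.even_add_one, he])]
          rcases hci with h1 | h1
          · exact absurd (h1.trans hr.symm) hcr
          · exact h1
      show c :: (r :: rest') = alternatingWord i j (rest'.length + 1 + 1)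
      rw [CoxeterSystem.alternatingWord_succ' i j (rest'.length + 1), ← hc2, ← hih]

lemma alt_reduce (i j : B) (hm : M i j ≠ 0) (L : ℕ) (hL : M i j < L) :
    ∃ ψ : List B, IsST i j ψ ∧ π ψ = π (alternatingWord i j L) ∧ ψ.length < L := by
  rcases Nat.lt_or_ge (M i j * 2) L with hbig | hsmall
  · refine ⟨alternatingWord i j (L - 2 * M i j),
      fun c hc => mem_alternatingWord i j _ c hc, ?_, by simp; omega⟩
    rw [cs.prod_alternatingWord_eq_mul_pow, cs.prod_alternatingWord_eq_mul_pow]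
    have hiff : Even (L - 2 * M i j) ↔ Even L := by
      rw [Nat.even_sub (by omega)]
      simp [even_two_mul]
    have hdiv : L / 2 = (L - 2 * M i j) / 2 + M i j := by omega
    rw [hdiv, pow_add, cs.simple_mul_simple_pow, mul_one]
    simp only [hiff]
  · refine ⟨alternatingWord j i (M i j * 2 - L), fun c hc => ?_, ?_, by simp; omega⟩
    · rcases mem_alternatingWord j i _ c hc with h | h
      exacts [Or.inr h, Or.inl h]
    · exact (cs.prod_alternatingWord_eq_prod_alternatingWord_sub i j L hsmall).symm

lemma exists_min_alt_word (i j : B) (v : W) (hex : ∃ χ : List B, IsST i j χ ∧ π χ = v) :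
    ∃ χ : List B, IsST i j χ ∧ π χ = v ∧ χ.Chain' (· ≠ ·) ∧
      (∀ ψ : List B, IsST i j ψ → π ψ = v → χ.length ≤ ψ.length) := by
  have hex2 : ∃ n, ∃ χ : List B, (IsST i j χ ∧ π χ = v) ∧ χ.length = n := by
    obtain ⟨χ, h1, h2⟩ := hex
    exact ⟨χ.length, χ, ⟨h1, h2⟩, rfl⟩
  obtain ⟨χ₀, ⟨hst, hπv⟩, hlen⟩ := Nat.find_spec hex2
  obtain ⟨ψ, hψst, hψch, hψπ, hψlen⟩ := exists_alternating cs i j χ₀ hst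
  refine ⟨ψ, hψst, by rw [hψπ, hπv], hψch, ?_⟩
  intro ψ' h1 h2
  have hmin := Nat.find_min' hex2 (m := ψ'.length) ⟨ψ', ⟨h1, h2⟩, rfl⟩
  omega

end CoxProof

namespace CoxProof

open CoxeterSystem List

variable {B : Type*} [Fintype B] [DecidableEq B] {W : Type*} [Group W]
  {M : CoxeterMatrix B} (cs : CoxeterSystem M W)

local prefix:100 "s" => cs.simple
local prefix:100 "π" => cs.wordProd
local prefix:100 "ℓ" => cs.length

lemma coxEntry_symm (i j : B) : coxEntry M i j = coxEntry M j i := by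
  unfold coxEntry
  rw [M.symmetric i j]

lemma coxEntry_diag (i : B) : coxEntry M i i = 2 := by
  unfold coxEntry
  rw [M.diagonal i]
  norm_num [Real.cos_pi]

lemma coxForm_comm (v w : B → ℝ) : coxForm M v w = coxForm M w v := by
  rw [coxForm, coxForm, Finset.sum_comm]
  apply Finset.sum_congr rfl
  intro t _
  apply Finset.sum_congr rfl
  intro u _
  rw [coxEntry_symm]
  ring

lemma coxForm_sub_smul_left (x u z : B → ℝ) (a : ℝ) :
    coxForm M (x - a • u) z = coxForm M x z - a * coxForm M u z := by
  unfold coxForm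
  rw [Finset.mul_sum, ← Finset.sum_sub_distrib]
  apply Finset.sum_congr rfl
  intro i _
  rw [Finset.mul_sum, ← Finset.sum_sub_distrib]
  apply Finset.sum_congr rfl
  intro t _
  simp only [Pi.sub_apply, Pi.smul_apply, smul_eq_mul]
  ring

lemma coxForm_sub_smul_right (z x u : B → ℝ) (a : ℝ) :
    coxForm M z (x - a • u) = coxForm M z x - a * coxForm M z u := by
  rw [coxForm_comm, coxForm_sub_smul_left, coxForm_comm x z, coxForm_comm u z]

lemma coxForm_add_right (z x y : B → ℝ) :
    coxForm M z (x + y) = coxForm M z x + coxForm M z y := by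
  have h := coxForm_sub_smul_right (M := M) z (x + y) y 1
  simp only [one_smul, add_sub_cancel_right, one_mul] at h
  linarith

lemma coxForm_smul_right (z x : B → ℝ) (a : ℝ) :
    coxForm M z (a • x) = a * coxForm M z x := by
  have h := coxForm_sub_smul_right (M := M) z 0 x (-a)
  simp only [neg_smul, zero_sub, neg_neg, neg_mul] at h
  have h0 : coxForm M z 0 = coxForm M z (0 + 0) := by norm_num
  rw [coxForm_add_right] at h0
  have h0' : coxForm M z 0 = 0 := by linarith
  rw [h0'] at h
  linarith

lemma coxForm_single (i j : B) :
    coxForm M (simpleRoot i) (simpleRoot j) = coxEntry M i j := by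
  unfold coxForm simpleRoot
  rw [Finset.sum_eq_single i]
  · rw [Finset.sum_eq_single j]
    · simp
    · intro t _ ht
      simp [Pi.single_apply, ht]
    · intro h
      exact absurd (Finset.mem_univ j) h
  · intro t _ ht
    rw [Finset.sum_eq_zero]
    intro u _
    simp [Pi.single_apply, ht]
  · intro h
    exact absurd (Finset.mem_univ i) h

variable (ρ : W →* ((B → ℝ) ≃ₗ[ℝ] (B → ℝ)))
  (hρ : ∀ (i : B) (v : B → ℝ),
    ρ (cs.simple i) v = v - coxForm M (simpleRoot i) v • simpleRoot i)

include hρ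

lemma rho_preserves_form (w : W) (x y : B → ℝ) :
    coxForm M (ρ w x) (ρ w y) = coxForm M x y := by
  induction w using cs.simple_induction generalizing x y with
  | simple i =>
    rw [hρ, hρ]
    rw [coxForm_sub_smul_left, coxForm_sub_smul_right, coxForm_sub_smul_right,
      coxForm_single, coxEntry_diag, coxForm_comm (simpleRoot i) x]
    ring
  | one => simp
  | mul w w' hw hw' =>
    rw [map_mul]
    have happ : ∀ z, (ρ w * ρ w') z = ρ w (ρ w' z) := fun z => rfl
    rw [happ, happ, hw, hw']

end CoxProof

namespace CoxProof

set_option linter.unusedSectionVars false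

open CoxeterSystem List

variable {B : Type*} [Fintype B] [DecidableEq B] {W : Type*} [Group W]
  {M : CoxeterMatrix B} (cs : CoxeterSystem M W)

local prefix:100 "s" => cs.simple
local prefix:100 "π" => cs.wordProd
local prefix:100 "ℓ" => cs.length

/-- `sin (n π / m)`. -/
noncomputable def SS (m : ℕ) (n : ℕ) : ℝ := Real.sin (n * (Real.pi / m))

lemma SS_zero (m : ℕ) : SS m 0 = 0 := by simp [SS]

lemma SS_rec (m n : ℕ) :
    SS m (n + 2) = 2 * Real.cos (Real.pi / m) * SS m (n + 1) - SS m n := by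
  unfold SS
  have h1 : ((n + 2 : ℕ) : ℝ) * (Real.pi / m) = ((n + 1 : ℕ) : ℝ) * (Real.pi / m)
      + Real.pi / m := by push_cast; ring
  have h2 : ((n : ℕ) : ℝ) * (Real.pi / m) = ((n + 1 : ℕ) : ℝ) * (Real.pi / m)
      - Real.pi / m := by push_cast; ring
  rw [h1, h2, Real.sin_add, Real.sin_sub]
  ring

lemma SS_nonneg (m n : ℕ) (h : n ≤ m) : 0 ≤ SS m n := by
  unfold SS
  apply Real.sin_nonneg_of_nonneg_of_le_pi
  · positivity
  · rcases Nat.eq_zero_or_pos m with h0 | h0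
    · subst h0
      interval_cases n
      simp [Real.pi_nonneg]
    · have hm : (0:ℝ) < m := by positivity
      calc (n : ℝ) * (Real.pi / m) ≤ (m : ℝ) * (Real.pi / m) := by
            apply mul_le_mul_of_nonneg_right (by exact_mod_cast h)
            positivity
        _ = Real.pi := by field_simp
lemma SS_one_pos (m : ℕ) (hm : 2 ≤ m) : 0 < SS m 1 := by
  unfold SS
  rw [Nat.cast_one, one_mul]
  apply Real.sin_pos_of_pos_of_lt_pi
  · have : (0:ℝ) < m := by positivity
    positivity
  · rw [div_lt_iff₀ (by positivity)]
    have h2 : (2:ℝ) ≤ (m:ℝ) := by exact_mod_cast hm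
    nlinarith [Real.pi_pos]

variable (ρ : W →* ((B → ℝ) ≃ₗ[ℝ] (B → ℝ)))
  (hρ : ∀ (i : B) (v : B → ℝ),
    ρ (cs.simple i) v = v - coxForm M (simpleRoot i) v • simpleRoot i)

include hρ

lemma rho_one_apply (x : B → ℝ) : ρ 1 x = x := by
  rw [map_one]
  rfl

lemma rho_mul_apply (w w' : W) (x : B → ℝ) : ρ (w * w') x = ρ w (ρ w' x) := by
  rw [map_mul]
  rfl

lemma coxForm_single_combo (x i j : B) (a b : ℝ) :
    coxForm M (simpleRoot x) (a • simpleRoot i + b • simpleRoot j)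
      = a * coxEntry M x i + b * coxEntry M x j := by
  rw [coxForm_add_right, coxForm_smul_right, coxForm_smul_right, coxForm_single, coxForm_single]

/-- Explicit formula for the action of alternating words on a simple root, finite case. -/
lemma rho_alt_formula (i j : B) (hij : i ≠ j) (hm : M i j ≠ 0) (k : ℕ) :
    ρ (π (alternatingWord i j k)) (simpleRoot i)
      = (SS (M i j) (k + if Even k then 1 else 0) / SS (M i j) 1) • simpleRoot i
        + (SS (M i j) (k + if Even k then 0 else 1) / SS (M i j) 1) • simpleRoot j := by
  have hm2 : 2 ≤ M i j := by
    have h1 := M.off_diagonal i j hij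
    omega
  have hS1 : SS (M i j) 1 ≠ 0 := ne_of_gt (SS_one_pos _ hm2)
  have hcox : coxEntry M i j = -(2 * Real.cos (Real.pi / (M i j))) := by
    unfold coxEntry
    rw [if_neg hm]
    ring
  have hcox' : coxEntry M j i = -(2 * Real.cos (Real.pi / (M i j))) := by
    rw [coxEntry_symm]; exact hcox
  have hvec : ∀ (u v : B → ℝ) (A C r : ℝ), (A•u + C•v) - r • v = A•u + (C - r)•v := by
    intros u v A C r
    ext z
    simp only [Pi.sub_apply, Pi.add_apply, Pi.smul_apply, smul_eq_mul]
    ring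
  have hvec' : ∀ (u v : B → ℝ) (A C r : ℝ), (A•u + C•v) - r • u = (A - r)•u + C•v := by
    intros u v A C r
    ext z
    simp only [Pi.sub_apply, Pi.add_apply, Pi.smul_apply, smul_eq_mul]
    ring
  set m := M i j
  set c := Real.cos (Real.pi / m) with hc
  induction k with
  | zero =>
    simp only [alternatingWord, cs.wordProd_nil, Nat.zero_add, if_pos (Even.zero)]
    rw [rho_one_apply cs ρ hρ, div_self hS1, SS_zero, zero_div]
    rw [one_smul, zero_smul, add_zero]
  | succ k ih =>
    rw [CoxeterSystem.alternatingWord_succ', cs.wordProd_cons,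
      rho_mul_apply cs ρ hρ, ih, apply_ite cs.simple, apply_ite ρ]
    by_cases he : Even k
    · have ho : ¬ Even (k + 1) := by simp [Nat.even_add_one, he]
      simp only [if_pos he, if_neg ho]
      rw [hρ j, coxForm_single_combo cs ρ hρ, hcox', coxEntry_diag, hvec]
      congr 1
      congr 1
      have hrec := SS_rec m k
      rw [show k + 1 + 1 = k + 2 by omega]
      field_simp
      rw [hrec, ← hc]
      ring
    · have ho : Even (k + 1) := Nat.even_add_one.mpr he
      simp only [if_pos ho, if_neg he]
      rw [hρ i, coxForm_single_combo cs ρ hρ, coxEntry_diag, hcox, hvec']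
      congr 1
      congr 1
      have hrec := SS_rec m k
      rw [show k + 1 + 1 = k + 2 by omega]
      field_simp
      rw [hrec, ← hc]
      ring

lemma rho_alt_inf (i j : B) (hij : i ≠ j) (hm : M i j = 0) (k : ℕ) :
    ∃ a b : ℝ, 0 ≤ a ∧ 0 ≤ b ∧ (if Even k then b ≤ a else a ≤ b) ∧
      ρ (π (alternatingWord i j k)) (simpleRoot i) = a • simpleRoot i + b • simpleRoot j := by
  have hcox : coxEntry M i j = -2 := if_pos hm
  have hm' : M j i = 0 := by rw [M.symmetric j i]; exact hm
  have hcox' : coxEntry M j i = -2 := if_pos hm'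
  have hvec : ∀ (u v : B → ℝ) (A C r : ℝ), (A•u + C•v) - r • v = A•u + (C - r)•v := by
    intros u v A C r
    ext z
    simp only [Pi.sub_apply, Pi.add_apply, Pi.smul_apply, smul_eq_mul]
    ring
  have hvec' : ∀ (u v : B → ℝ) (A C r : ℝ), (A•u + C•v) - r • u = (A - r)•u + C•v := by
    intros u v A C r
    ext z
    simp only [Pi.sub_apply, Pi.add_apply, Pi.smul_apply, smul_eq_mul]
    ring
  induction k with
  | zero =>
    refine ⟨1, 0, by norm_num, le_refl 0, by norm_num, ?_⟩
    simp only [alternatingWord, cs.wordProd_nil]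
    rw [rho_one_apply cs ρ hρ, one_smul, zero_smul, add_zero]
  | succ k ih =>
    obtain ⟨a, b, ha, hb, hord, hform⟩ := ih
    rw [CoxeterSystem.alternatingWord_succ', cs.wordProd_cons, rho_mul_apply cs ρ hρ, hform,
      apply_ite cs.simple, apply_ite ρ]
    by_cases he : Even k
    · have ho : ¬ Even (k + 1) := by simp [Nat.even_add_one, he]
      rw [if_pos he] at hord ⊢
      rw [hρ j, coxForm_single_combo cs ρ hρ, hcox', coxEntry_diag, hvec]
      exact ⟨a, b - (a * (-2) + b * 2), ha, by linarith, by rw [if_neg ho]; linarith, rfl⟩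
    · have ho : Even (k + 1) := Nat.even_add_one.mpr he
      rw [if_neg he] at hord ⊢
      rw [hρ i, coxForm_single_combo cs ρ hρ, coxEntry_diag, hcox, hvec']
      exact ⟨a - (a * 2 + b * (-2)), b, by linarith, hb, by rw [if_pos ho]; linarith, rfl⟩

lemma rho_alt_nonneg (i j : B) (hij : i ≠ j) (k : ℕ) (hk : M i j = 0 ∨ k + 1 ≤ M i j) :
    ∃ a b : ℝ, 0 ≤ a ∧ 0 ≤ b ∧
      ρ (π (alternatingWord i j k)) (simpleRoot i) = a • simpleRoot i + b • simpleRoot j := by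
  rcases hk with hm | hfin
  · obtain ⟨a, b, ha, hb, _, hform⟩ := rho_alt_inf cs ρ hρ i j hij hm k
    exact ⟨a, b, ha, hb, hform⟩
  · have hm : M i j ≠ 0 := by omega
    have hm2 : 2 ≤ M i j := by
      have h1 := M.off_diagonal i j hij
      omega
    have hS1 : 0 < SS (M i j) 1 := SS_one_pos _ hm2
    refine ⟨_, _, ?_, ?_, rho_alt_formula cs ρ hρ i j hij hm k⟩
    · apply div_nonneg _ (le_of_lt hS1)
      apply SS_nonneg
      by_cases he : Even k <;> simp [he] <;> omega
    · apply div_nonneg _ (le_of_lt hS1)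
      apply SS_nonneg
      by_cases he : Even k <;> simp [he] <;> omega

/-- Master positivity theorem: if `ℓ(w sᵢ) > ℓ(w)` then `ρ w (αᵢ)` is nonnegative. -/
theorem rho_pos_aux : ∀ n : ℕ, ∀ w : W, ℓ w = n → ∀ i : B, ℓ (w * s i) = ℓ w + 1 →
    ∀ x : B, 0 ≤ ρ w (simpleRoot i) x := by
  intro n
  induction n using Nat.strong_induction_on with
  | _ n ih =>
    intro w hlw i hinc x
    rcases Nat.eq_zero_or_pos n with h0 | hpos
    · have hw1 : w = 1 := cs.length_eq_zero_iff.mp (by omega)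
      subst hw1
      rw [rho_one_apply cs ρ hρ]
      unfold simpleRoot
      rw [Pi.single_apply]
      split <;> norm_num
    · have hw1 : w ≠ 1 := fun h => by rw [h, cs.length_one] at hlw; omega
      obtain ⟨t, ht⟩ := cs.exists_rightDescent_of_ne_one hw1
      have ht' : ℓ (w * s t) < ℓ w := ht
      have hit : i ≠ t := fun h => by rw [← h] at ht'; omega
      have hex : ∃ nn : ℕ, ∃ χ : List B, IsST i t χ ∧ ℓ (w * π χ) = nn :=
        ⟨ℓ w, [], fun d hd => absurd hd List.not_mem_nil, by simp⟩
      obtain ⟨χᵤ, hχᵤst, hχᵤlen⟩ := Nat.find_spec hex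
      set u := w * π χᵤ with hu
      have humin : ∀ ψ : List B, IsST i t ψ → ℓ u ≤ ℓ (u * π ψ) := by
        intro ψ hψ
        have h1 : u * π ψ = w * π (χᵤ ++ ψ) := by rw [cs.wordProd_append, hu, mul_assoc]
        have h2 := Nat.find_min' hex ⟨χᵤ ++ ψ, fun d hd => by
            rcases List.mem_append.mp hd with h | h
            exacts [hχᵤst d h, hψ d h], rfl⟩
        rw [h1]
        omega
      have hlu_lt : ℓ u < n := by
        have h2 := Nat.find_min' hex ⟨[t], fun d hd => Or.inr (by simpa using hd), rfl⟩
        have h3 : ℓ (w * π [t]) = ℓ (w * s t) := by rw [cs.wordProd_singleton]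
        omega
      have hui : ℓ (u * s i) = ℓ u + 1 := by
        rcases cs.length_mul_simple u i with h | h
        · exact h
        · exfalso
          have h2 := humin [i] (fun d hd => Or.inl (by simpa using hd))
          rw [cs.wordProd_singleton] at h2
          omega
      have hut : ℓ (u * s t) = ℓ u + 1 := by
        rcases cs.length_mul_simple u t with h | h
        · exact h
        · exfalso
          have h2 := humin [t] (fun d hd => Or.inr (by simpa using hd))
          rw [cs.wordProd_singleton] at h2
          omega
      have hαpos := ih (ℓ u) (by omega) u rfl i hui
      have hβpos := ih (ℓ u) (by omega) u rfl t hut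
      have hwu : w = u * π χᵤ.reverse := by
        rw [cs.wordProd_reverse, hu, mul_assoc, mul_inv_cancel, mul_one]
      obtain ⟨χ, hχst, hχπ, hχch, hχmin⟩ := exists_min_alt_word cs i t (π χᵤ.reverse)
        ⟨χᵤ.reverse, fun d hd => hχᵤst d (List.mem_reverse.mp hd), rfl⟩
      have hwuχ : w = u * π χ := by rw [hχπ, ← hwu]
      obtain ⟨ωu, hωulen, hωuprod⟩ := cs.exists_reduced_word u
      have hred : cs.IsReduced ωu := by
        exact hωulen
      have hminχ : ∀ ψ, IsST i t ψ → π ψ = π χ → χ.length ≤ ψ.length := by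
        intro ψ h1 h2
        exact hχmin ψ h1 (h2.trans hχπ)
      have hRED := reduced_append_of_minimal cs i t u humin ωu hred hωuprod.symm χ hχst hminχ
      have hπall : π (ωu ++ χ) = w := by
        rw [cs.wordProd_append, ← hωuprod, ← hwuχ]
      have hwadd : ℓ w = ℓ u + χ.length := by
        have h1 : ℓ (π (ωu ++ χ)) = (ωu ++ χ).length := hRED
        rw [hπall, List.length_append, ← hωulen, ← hωuprod] at h1
        exact h1
      have hlast_ne : χ = [] ∨ χ.getLast? = some t := by
        rcases eq_or_ne χ [] with hnil | hnem
        · exact Or.inl hnil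
        · right
          rcases hχst _ (List.getLast_mem hnem) with hli | hlt
          · exfalso
            have hdec : χ.dropLast ++ [χ.getLast hnem] = χ := List.dropLast_append_getLast hnem
            have hπχ : π χ = π χ.dropLast * s i := by
              conv_lhs => rw [← hdec]
              rw [cs.wordProd_append, cs.wordProd_singleton, hli]
            have hws : w * s i = u * π χ.dropLast := by
              rw [hwuχ, hπχ, ← mul_assoc u, cs.simple_mul_simple_cancel_right]
            have hlen : ℓ (w * s i) ≤ ℓ u + χ.dropLast.length := by
              rw [hws]
              have h1 := cs.length_mul_le u (π χ.dropLast)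
              have h2 := cs.length_wordProd_le χ.dropLast
              omega
            have hdl : χ.dropLast.length = χ.length - 1 := List.length_dropLast
            have hχpos : 0 < χ.length := List.length_pos_iff.mpr hnem
            omega
          · rw [List.getLast?_eq_getLast hnem, hlt]
      have hχalt : χ = alternatingWord i t χ.length :=
        eq_alternatingWord_of_chain i t χ hχst hχch hlast_ne
      have hbound : M i t = 0 ∨ χ.length + 1 ≤ M i t := by
        rcases eq_or_ne (M i t) 0 with hmz | hmz
        · exact Or.inl hmz
        · right
          have hle : χ.length ≤ M i t := by
            by_contra hgt
            obtain ⟨ψ, hψst, hψπ, hψlen⟩ := alt_reduce cs i t hmz χ.length (by omega)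
            have := hminχ ψ hψst (by rw [hψπ, ← hχalt])
            omega
          rcases Nat.lt_or_ge χ.length (M i t) with hlt2 | hge
          · omega
          · exfalso
            have heq : χ.length = M i t := by omega
            have h1 : π (alternatingWord i t (M i t)) = π (alternatingWord t i (M i t)) := by
              have h2 := cs.prod_alternatingWord_eq_prod_alternatingWord_sub i t (M i t)
                (by omega)
              rwa [show M i t * 2 - M i t = M i t by omega] at h2
            have h3 : alternatingWord t i (M i t)
                = (alternatingWord i t (M i t - 1)).concat i := by
              conv_lhs => rw [show M i t = (M i t - 1) + 1 by omega]
              rw [CoxeterSystem.alternatingWord_succ]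
            have h4 : π χ * s i = π (alternatingWord i t (M i t - 1)) := by
              rw [hχalt, heq, h1, h3, cs.wordProd_concat, cs.simple_mul_simple_cancel_right]
            have hws : w * s i = u * π (alternatingWord i t (M i t - 1)) := by
              rw [hwuχ, mul_assoc, h4]
            have hlen2 : ℓ (w * s i) ≤ ℓ u + (M i t - 1) := by
              rw [hws]
              have h5 := cs.length_mul_le u (π (alternatingWord i t (M i t - 1)))
              have h6 := cs.length_wordProd_le (alternatingWord i t (M i t - 1))
              rw [CoxeterSystem.length_alternatingWord] at h6
              omega
            omega
      obtain ⟨a, b, ha, hb, hform⟩ := rho_alt_nonneg cs ρ hρ i t hit χ.length hbound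
      have hform' : ρ (π χ) (simpleRoot i) = a • simpleRoot i + b • simpleRoot t := by
        rw [hχalt]
        exact hform
      rw [hwuχ, rho_mul_apply cs ρ hρ, hform', map_add, map_smul, map_smul]
      simp only [Pi.add_apply, Pi.smul_apply, smul_eq_mul]
      exact add_nonneg (mul_nonneg ha (hαpos x)) (mul_nonneg hb (hβpos x))

lemma rho_simple_self (i : B) : ρ (s i) (simpleRoot i) = - simpleRoot i := by
  rw [hρ, coxForm_single, coxEntry_diag]
  ext z
  simp only [Pi.sub_apply, Pi.smul_apply, Pi.neg_apply, smul_eq_mul]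
  ring

lemma rootSet_neg {α : B → ℝ} (h : α ∈ rootSet ρ) : -α ∈ rootSet ρ := by
  obtain ⟨w, i, rfl⟩ := h
  refine ⟨w * s i, i, ?_⟩
  rw [rho_mul_apply cs ρ hρ, rho_simple_self cs ρ hρ, map_neg]

lemma rootSet_rho {α : B → ℝ} (h : α ∈ rootSet ρ) (w : W) : ρ w α ∈ rootSet ρ := by
  obtain ⟨w', i, rfl⟩ := h
  exact ⟨w * w', i, (rho_mul_apply cs ρ hρ w w' _).symm⟩

lemma root_norm {α : B → ℝ} (h : α ∈ rootSet ρ) : coxForm M α α = 2 := by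
  obtain ⟨w, i, rfl⟩ := h
  rw [rho_preserves_form cs ρ hρ, coxForm_single, coxEntry_diag]

lemma root_ne_zero {α : B → ℝ} (h : α ∈ rootSet ρ) : α ≠ 0 := by
  intro h0
  have h1 := root_norm cs ρ hρ h
  rw [h0] at h1
  have hz : coxForm M (0 : B → ℝ) 0 = 0 := by
    unfold coxForm
    simp
  rw [hz] at h1
  norm_num at h1

theorem root_dichotomy {α : B → ℝ} (h : α ∈ rootSet ρ) :
    (∀ x, 0 ≤ α x) ∨ (∀ x, α x ≤ 0) := by
  obtain ⟨w, i, rfl⟩ := h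
  rcases cs.length_mul_simple w i with hinc | hdec
  · exact Or.inl (rho_pos_aux cs ρ hρ (ℓ w) w rfl i hinc)
  · right
    set w' := w * s i with hw'
    have hss : w = w' * s i := by rw [hw', mul_assoc, cs.simple_mul_simple_self, mul_one]
    have h2 : ℓ (w' * s i) = ℓ w' + 1 := by rw [← hss]; omega
    have h3 := rho_pos_aux cs ρ hρ (ℓ w') w' rfl i h2
    intro x
    have h4 : ρ w (simpleRoot i) = - ρ w' (simpleRoot i) := by
      rw [hss, rho_mul_apply cs ρ hρ, rho_simple_self cs ρ hρ, map_neg]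
    rw [h4]
    simp only [Pi.neg_apply]
    linarith [h3 x]

lemma simpleRoot_nonneg (i x : B) : 0 ≤ simpleRoot i x := by
  unfold simpleRoot
  rw [Pi.single_apply]
  split <;> norm_num

lemma simpleRoot_mem_pos (i : B) : simpleRoot i ∈ posRootSet ρ :=
  ⟨⟨1, i, (rho_one_apply cs ρ hρ _).symm⟩, fun x => simpleRoot_nonneg cs ρ hρ i x⟩

lemma pos_root_exists_pos {α : B → ℝ} (h : α ∈ posRootSet ρ) : ∃ x, 0 < α x := by
  have hne := root_ne_zero cs ρ hρ h.1
  by_contra hc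
  push_neg at hc
  apply hne
  funext x
  exact le_antisymm (hc x) (h.2 x)

lemma rho_invol (i : B) (v : B → ℝ) : ρ (s i) (ρ (s i) v) = v := by
  rw [← rho_mul_apply cs ρ hρ, cs.simple_mul_simple_self, rho_one_apply cs ρ hρ]

lemma coxForm_smul_left (x y : B → ℝ) (a : ℝ) :
    coxForm M (a • x) y = a * coxForm M x y := by
  rw [coxForm_comm, coxForm_smul_right, coxForm_comm]

lemma reflect_pos_root {α : B → ℝ} (i : B) (h : α ∈ posRootSet ρ)
    (hne : α ≠ simpleRoot i) : ρ (s i) α ∈ posRootSet ρ := by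
  have hroot : ρ (s i) α ∈ rootSet ρ := rootSet_rho cs ρ hρ h.1 (s i)
  rcases root_dichotomy cs ρ hρ hroot with hp | hn
  · exact ⟨hroot, hp⟩
  · exfalso
    have hcoord : ∀ x, x ≠ i → α x = 0 := by
      intro x hx
      have h1 : ρ (s i) α x = α x := by
        rw [hρ]
        simp [simpleRoot, Pi.single_apply, hx]
      have h2 := hn x
      have h3 := h.2 x
      rw [h1] at h2
      linarith
    have hαi : α = α i • simpleRoot i := by
      funext x
      by_cases hx : x = i
      · subst hx
        simp [simpleRoot]
      · simp [simpleRoot, Pi.single_apply, hx, hcoord x hx]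
    have hnorm := root_norm cs ρ hρ h.1
    rw [hαi, coxForm_smul_left cs ρ hρ, coxForm_smul_right, coxForm_single, coxEntry_diag] at hnorm
    have hsq : (α i - 1) * (α i + 1) = 0 := by nlinarith
    have hnn := h.2 i
    have h1 : α i = 1 := by
      rcases mul_eq_zero.mp hsq with h' | h'
      · linarith
      · linarith
    apply hne
    rw [hαi, h1, one_smul]

lemma inv_finite (w : W) :
    {γ : B → ℝ | γ ∈ posRootSet ρ ∧ ρ w γ ∉ posRootSet ρ}.Finite := by
  obtain ⟨ω, rfl⟩ := cs.wordProd_surjective w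
  induction ω with
  | nil =>
    convert Set.finite_empty
    ext γ
    simp only [Set.mem_setOf_eq, Set.mem_empty_iff_false, iff_false, not_and]
    intro hγ
    rw [cs.wordProd_nil, rho_one_apply cs ρ hρ]
    exact fun hc => hc hγ
  | cons iℓ ω ih =>
    apply Set.Finite.subset (ih.union (Set.finite_singleton (ρ ((π ω)⁻¹) (simpleRoot iℓ))))
    intro γ ⟨hγpos, hγbad⟩
    by_cases hmem : ρ (π ω) γ ∈ posRootSet ρ
    · right
      rw [Set.mem_singleton_iff]
      have hδ : ρ (π ω) γ = simpleRoot iℓ := by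
        by_contra hδne
        apply hγbad
        rw [cs.wordProd_cons, rho_mul_apply cs ρ hρ]
        exact reflect_pos_root cs ρ hρ iℓ hmem hδne
      rw [← hδ, ← rho_mul_apply cs ρ hρ, inv_mul_cancel, rho_one_apply cs ρ hρ]
    · exact Or.inl ⟨hγpos, hmem⟩

lemma dual_nonneg_on_pos (Z : Module.Dual ℝ (B → ℝ)) (w : W)
    (h : ∀ i, 0 ≤ Z (ρ w (simpleRoot i))) {β : B → ℝ} (hβ : β ∈ posRootSet ρ) :
    0 ≤ Z (ρ w β) := by
  have hdecomp : β = ∑ x, β x • simpleRoot x := by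
    funext y
    rw [Finset.sum_apply]
    simp [simpleRoot, Pi.single_apply]
  rw [hdecomp, map_sum, map_sum]
  apply Finset.sum_nonneg
  intro x _
  rw [map_smul, map_smul]
  exact mul_nonneg (hβ.2 x) (h x)

/-- Forward direction. -/
lemma finite_neg_of_titsCone (Z : Module.Dual ℝ (B → ℝ)) (h : Z ∈ titsCone ρ) :
    {α : B → ℝ | α ∈ posRootSet ρ ∧ Z α < 0}.Finite := by
  obtain ⟨w, hw⟩ := h
  apply Set.Finite.subset (((inv_finite cs ρ hρ w).image (fun γ => -(ρ w γ))))
  rintro α ⟨hαpos, hαneg⟩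
  refine ⟨ρ (w⁻¹) (-α), ⟨?_, ?_⟩, ?_⟩
  · -- positive root
    have hroot : ρ (w⁻¹) (-α) ∈ rootSet ρ :=
      rootSet_rho cs ρ hρ (rootSet_neg cs ρ hρ hαpos.1) w⁻¹
    refine ⟨hroot, ?_⟩
    rcases root_dichotomy cs ρ hρ hroot with hp | hn
    · exact hp
    · exfalso
      have hβ : ρ (w⁻¹) α ∈ posRootSet ρ := by
        refine ⟨rootSet_rho cs ρ hρ hαpos.1 w⁻¹, fun x => ?_⟩
        have := hn x
        rw [map_neg] at this
        simp only [Pi.neg_apply] at this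
        linarith
      have h2 := dual_nonneg_on_pos cs ρ hρ Z w hw hβ
      rw [← rho_mul_apply cs ρ hρ, mul_inv_cancel, rho_one_apply cs ρ hρ] at h2
      linarith
  · -- image not positive
    intro hc
    rw [← rho_mul_apply cs ρ hρ, mul_inv_cancel, rho_one_apply cs ρ hρ] at hc
    obtain ⟨x, hx⟩ := pos_root_exists_pos cs ρ hρ hαpos
    have := hc.2 x
    simp only [Pi.neg_apply] at this
    linarith
  · show -(ρ w (ρ (w⁻¹) (-α))) = α
    rw [← rho_mul_apply cs ρ hρ, mul_inv_cancel, rho_one_apply cs ρ hρ, neg_neg]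

/-- Converse direction, by strong induction on the number of negatives. -/
lemma titsCone_of_finite_neg :
    ∀ N : ℕ, ∀ Z : Module.Dual ℝ (B → ℝ),
      {α : B → ℝ | α ∈ posRootSet ρ ∧ Z α < 0}.Finite →
      {α : B → ℝ | α ∈ posRootSet ρ ∧ Z α < 0}.ncard = N → Z ∈ titsCone ρ := by
  intro N
  induction N using Nat.strong_induction_on with
  | _ N ihN =>
    intro Z hfin hcard
    by_cases hall : ∀ i : B, 0 ≤ Z (simpleRoot i)
    · refine ⟨1, fun i => ?_⟩
      rw [rho_one_apply cs ρ hρ]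
      exact hall i
    · push_neg at hall
      obtain ⟨i, hZi⟩ := hall
      have hmem : simpleRoot i ∈ {α : B → ℝ | α ∈ posRootSet ρ ∧ Z α < 0} :=
        ⟨simpleRoot_mem_pos cs ρ hρ i, hZi⟩
      set S := {α : B → ℝ | α ∈ posRootSet ρ ∧ Z α < 0} with hS
      set Z' : Module.Dual ℝ (B → ℝ) := Z.comp ((ρ (s i) : (B → ℝ) ≃ₗ[ℝ] (B → ℝ)) :
        (B → ℝ) →ₗ[ℝ] (B → ℝ)) with hZ'
      have hZ'app : ∀ v, Z' v = Z (ρ (s i) v) := fun v => rfl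
      have hSeq : {α : B → ℝ | α ∈ posRootSet ρ ∧ Z' α < 0}
          = (fun v => ρ (s i) v) '' (S \ {simpleRoot i}) := by
        ext α
        constructor
        · rintro ⟨hαpos, hαneg⟩
          rw [hZ'app] at hαneg
          have hαne : α ≠ simpleRoot i := by
            intro hc
            rw [hc, rho_simple_self cs ρ hρ, map_neg] at hαneg
            linarith
          refine ⟨ρ (s i) α, ⟨⟨reflect_pos_root cs ρ hρ i hαpos hαne, hαneg⟩, ?_⟩,
            rho_invol cs ρ hρ i α⟩
          rw [Set.mem_singleton_iff]
          intro hc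
          have hc2 : α = ρ (s i) (simpleRoot i) := by
            rw [← hc, rho_invol cs ρ hρ]
          rw [rho_simple_self cs ρ hρ] at hc2
          have h3 := hαpos.2 i
          rw [hc2] at h3
          simp only [Pi.neg_apply] at h3
          have h4 : simpleRoot i i = 1 := by simp [simpleRoot]
          rw [h4] at h3
          linarith
        · rintro ⟨β, ⟨⟨hβpos, hβneg⟩, hβne⟩, rfl⟩
          rw [Set.mem_singleton_iff] at hβne
          refine ⟨reflect_pos_root cs ρ hρ i hβpos hβne, ?_⟩
          rw [hZ'app, rho_invol cs ρ hρ]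
          exact hβneg
      have hfin' : {α : B → ℝ | α ∈ posRootSet ρ ∧ Z' α < 0}.Finite := by
        rw [hSeq]
        exact hfin.diff.image _
      have hNpos : 0 < N := by
        rw [← hcard]
        exact (Set.ncard_pos hfin).mpr ⟨_, hmem⟩
      have hcard' : {α : B → ℝ | α ∈ posRootSet ρ ∧ Z' α < 0}.ncard = N - 1 := by
        rw [hSeq, Set.ncard_image_of_injective _ (EquivLike.injective (ρ (s i))),
          Set.ncard_diff_singleton_of_mem hmem, hcard]
      obtain ⟨w, hw⟩ := ihN (N - 1) (by omega) Z' hfin' hcard'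
      refine ⟨s i * w, fun x => ?_⟩
      rw [rho_mul_apply cs ρ hρ]
      exact hw x

theorem main_result (Z : Module.Dual ℝ (B → ℝ)) :
    Z ∈ titsCone ρ ↔ {α : B → ℝ | α ∈ posRootSet ρ ∧ Z α < 0}.Finite := by
  constructor
  · exact finite_neg_of_titsCone cs ρ hρ Z
  · intro hfin
    exact titsCone_of_finite_neg cs ρ hρ _ Z hfin rfl

end CoxProof


/-!
STATEMENT 5: A linear functional Z on RΛ lies in the Tits cone W·C̄ if and only if Z(α) < 0
for only finitely many positive real roots α ∈ Φ⁺.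
-/
theorem mem_titsCone_iff_finite_negatives
    {B : Type*} [Fintype B] [DecidableEq B] (M : CoxeterMatrix B)
    {W : Type*} [Group W] (cs : CoxeterSystem M W)
    (ρ : W →* ((B → ℝ) ≃ₗ[ℝ] (B → ℝ)))
    (hρ : ∀ (s : B) (v : B → ℝ),
      ρ (cs.simple s) v = v - coxForm M (simpleRoot s) v • simpleRoot s)
    (Z : Module.Dual ℝ (B → ℝ)) :
    Z ∈ titsCone ρ ↔ {α | α ∈ posRootSet ρ ∧ Z α < 0}.Finite := by
  exact CoxProof.main_result cs ρ hρ Z
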